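/- No strictly increasing ω-sequence of subTuring degrees has a supremum: if (g_n) is a sequence of partial functions with g_n <subT g_{n+1} for all n, and h is any upper bound (g_n ≤subT h for all n), then there exists a partial function f such that g_n ≤subT f for all n but h is not subTuring reducible to f. -/

import Mathlib

open Classical

noncomputable section

/-- `as` is a valid answer history for the sequential oracle computation of `Φ`
with oracle `g` on input `n`: at each round `k`, the machine outputs a query
`(false, q)` with `q` in the domain of `g`, answered by `g q = as[k]`. -/
def ValidHist (Φ : List ℕ →. Bool × ℕ) (g : ℕ →. ℕ) (n : ℕ) (as : List ℕ) : Prop :=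
  ∀ (k : ℕ) (hk : k < as.length), ∃ q : ℕ,
    (false, q) ∈ Φ (n :: as.take k) ∧ (as[k]'hk) ∈ g q

/-- The sequential oracle computation `Φ[g](n)` halts with output `m`. -/
def HaltsTo (Φ : List ℕ →. Bool × ℕ) (g : ℕ →. ℕ) (n m : ℕ) : Prop :=
  ∃ as : List ℕ, ValidHist Φ g n as ∧ (true, m) ∈ Φ (n :: as)

/-- subTuring reducibility: `f ⊆ Φ[g]` for some partial computable `Φ`. -/
def SubTuringLE (f g : ℕ →. ℕ) : Prop :=
  ∃ Φ : List ℕ →. Bool × ℕ, Partrec Φ ∧ ∀ n m, m ∈ f n → HaltsTo Φ g n m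

/-- subTuring equivalence. -/
def SubTuringEquiv (f g : ℕ →. ℕ) : Prop := SubTuringLE f g ∧ SubTuringLE g f

namespace NoSup


def Subfn (f g : ℕ →. ℕ) : Prop := ∀ q a, a ∈ f q → a ∈ g q

theorem validHist_mono {Φ : List ℕ →. Bool × ℕ} {g g' : ℕ →. ℕ} {n : ℕ} {as : List ℕ}
    (hg : Subfn g g') (hv : ValidHist Φ g n as) : ValidHist Φ g' n as := fun k hk =>
  let ⟨q, h1, h2⟩ := hv k hk; ⟨q, h1, hg _ _ h2⟩

theorem haltsTo_mono {Φ : List ℕ →. Bool × ℕ} {g g' : ℕ →. ℕ} {n m : ℕ}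
    (hg : Subfn g g') : HaltsTo Φ g n m → HaltsTo Φ g' n m := fun ⟨as, hv, he⟩ =>
  ⟨as, validHist_mono hg hv, he⟩

theorem hist_take {Φ : List ℕ →. Bool × ℕ} {g : ℕ →. ℕ} {n : ℕ} {as as' : List ℕ}
    (hv : ValidHist Φ g n as) (hv' : ValidHist Φ g n as') :
    ∀ k, k ≤ as.length → k ≤ as'.length → as.take k = as'.take k := by
  intro k
  induction k with
  | zero => simp
  | succ k ih =>
    intro hk hk'
    have ht := ih (Nat.le_of_succ_le hk) (Nat.le_of_succ_le hk')
    obtain ⟨q, h1, h2⟩ := hv k hk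
    obtain ⟨q', h1', h2'⟩ := hv' k hk'
    rw [ht] at h1
    have hq : q = q' := by
      have := Part.mem_unique h1 h1'
      exact (Prod.mk.injEq _ _ _ _).mp this |>.2
    subst hq
    have he : as[k] = as'[k] := Part.mem_unique h2 h2'
    rw [List.take_succ, List.take_succ, ht, List.getElem?_eq_getElem hk,
      List.getElem?_eq_getElem hk', he]

/-- If the (unique) halting computation of `Φ` on oracle `M` makes a query `q`
outside the domain of a suboracle `M'`, then `Φ` on `M'` does not halt at all. -/
theorem halts_blocked {Φ : List ℕ →. Bool × ℕ} {M M' : ℕ →. ℕ} {n : ℕ}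
    (hsub : Subfn M' M) {as : List ℕ} {m : ℕ}
    (hv : ValidHist Φ M n as) (hm : (true, m) ∈ Φ (n :: as))
    {j : ℕ} (hj : j < as.length) {q : ℕ} (hq : (false, q) ∈ Φ (n :: as.take j))
    (hdom : ∀ a, a ∉ M' q) : ∀ m', ¬ HaltsTo Φ M' n m' := by
  rintro m' ⟨as', hv', hm'⟩
  have hv'M : ValidHist Φ M n as' := validHist_mono hsub hv'
  rcases lt_trichotomy as'.length as.length with hlen | hlen | hlen
  · have ht := hist_take hv hv'M as'.length (le_of_lt hlen) le_rfl
    rw [List.take_length] at ht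
    obtain ⟨q0, h0, _⟩ := hv as'.length hlen
    rw [ht] at h0
    exact absurd (Part.mem_unique h0 hm') (by simp)
  · have ht := hist_take hv hv'M as.length le_rfl (le_of_eq hlen.symm)
    rw [List.take_length, hlen.symm, List.take_length] at ht
    obtain ⟨q2, hq2, ha2⟩ := hv' j (by rw [← ht] at hlen ⊢; omega)
    have : as'.take j = as.take j := by rw [← ht]
    rw [this] at hq2
    have hqq : q2 = q := by
      have := Part.mem_unique hq2 hq
      exact ((Prod.mk.injEq _ _ _ _).mp this).2
    subst hqq
    exact hdom _ ha2
  · have ht := hist_take hv hv'M as.length le_rfl (le_of_lt hlen)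
    rw [List.take_length] at ht
    obtain ⟨q0, h0, _⟩ := hv' as.length hlen
    rw [← ht] at h0
    exact absurd (Part.mem_unique hm h0) (by simp)



/-- The one-query reduction machine: query `qf n`, return the answer. -/
def qPhi (qf : ℕ → ℕ) : List ℕ →. Bool × ℕ := fun l =>
  Part.ofOption
    (if l.length = 1 then some (false, qf l.headI)
     else if l.length = 2 then some (true, l.tail.headI) else none)

theorem qPhi_partrec {qf : ℕ → ℕ} (hqf : Computable qf) : Partrec (qPhi qf) := by
  apply Computable.ofOption
  have hlen : Computable fun l : List ℕ => l.length := Computable.list_length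
  have h1 : Computable fun l : List ℕ => decide (l.length = 1) :=
    (Primrec.eq.comp (Primrec.list_length) (Primrec.const 1)).decide.to_comp
  have h2 : Computable fun l : List ℕ => decide (l.length = 2) :=
    (Primrec.eq.comp (Primrec.list_length) (Primrec.const 2)).decide.to_comp
  have hheadI : Computable fun l : List ℕ => l.headI := Primrec.list_headI.to_comp
  have htail : Computable fun l : List ℕ => l.tail.headI :=
    (Primrec.list_headI.comp Primrec.list_tail).to_comp
  have hv1 : Computable fun l : List ℕ => some ((false, qf l.headI) : Bool × ℕ) :=
    Computable.option_some.comp (Computable.pair (Computable.const false) (hqf.comp hheadI))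
  have hv2 : Computable fun l : List ℕ => some ((true, l.tail.headI) : Bool × ℕ) :=
    Computable.option_some.comp (Computable.pair (Computable.const true) htail)
  have := Computable.cond h1 hv1 (Computable.cond h2 hv2 (Computable.const none))
  exact this.of_eq fun l => by by_cases e1 : l.length = 1 <;> by_cases e2 : l.length = 2 <;>
    simp [e1, e2]

theorem subT_query {f G : ℕ →. ℕ} (τ : ℕ → ℕ) (hτ : Computable τ)
    (hfg : ∀ u a, a ∈ f u → a ∈ G (τ u)) : SubTuringLE f G := by
  refine ⟨qPhi τ, qPhi_partrec hτ, fun n m hm => ⟨[m], ?_, ?_⟩⟩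
  · intro k hk
    simp only [List.length_singleton] at hk
    interval_cases k
    exact ⟨τ n, by simp [qPhi], hfg n m hm⟩
  · simp [qPhi]

theorem subT_refl (f : ℕ →. ℕ) : SubTuringLE f f :=
  subT_query id Computable.id (fun _ _ h => h)

theorem subT_empty {f G : ℕ →. ℕ} (hf : ∀ u a, a ∈ f u → False) : SubTuringLE f G :=
  ⟨fun _ => Part.none, Partrec.none, fun n m hm => absurd hm (hf n m)⟩

theorem subT_congr {f f' G : ℕ →. ℕ} (hf : SubTuringLE f G) (he : ∀ u, f' u = f u) :
    SubTuringLE f' G := by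
  obtain ⟨Φ, hΦ, hc⟩ := hf
  exact ⟨Φ, hΦ, fun n m hm => hc n m (by rw [← he]; exact hm)⟩

theorem subT_ite {P : ℕ → Bool} (hP : Computable P) {f₁ f₂ G : ℕ →. ℕ}
    (h₁ : SubTuringLE f₁ G) (h₂ : SubTuringLE f₂ G) :
    SubTuringLE (fun u => cond (P u) (f₁ u) (f₂ u)) G := by
  obtain ⟨Φ₁, hΦ₁, hc₁⟩ := h₁
  obtain ⟨Φ₂, hΦ₂, hc₂⟩ := h₂
  refine ⟨fun l => cond (P l.headI) (Φ₁ l) (Φ₂ l),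
    Partrec.cond (hP.comp (Primrec.list_headI.to_comp)) hΦ₁ hΦ₂, fun n m hm => ?_⟩
  simp only at hm
  cases hPn : P n with
  | true =>
    rw [hPn] at hm
    obtain ⟨as, hv, he⟩ := hc₁ n m hm
    refine ⟨as, fun k hk => ?_, by simpa [hPn]⟩
    obtain ⟨q, hq, ha⟩ := hv k hk
    exact ⟨q, by simpa [hPn], ha⟩
  | false =>
    rw [hPn] at hm
    obtain ⟨as, hv, he⟩ := hc₂ n m hm
    refine ⟨as, fun k hk => ?_, by simpa [hPn]⟩
    obtain ⟨q, hq, ha⟩ := hv k hk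
    exact ⟨q, by simpa [hPn], ha⟩



/-- State of the composition machine: `(n, φas, flag, (q, ψas), rest)`. -/
abbrev TState : Type := ℕ × List ℕ × Bool × (ℕ × List ℕ) × List ℕ

/-- One step of the machine simulating `Φ` whose oracle queries are answered by
running `Ψ`-computations, consuming the history `rest`. -/
def tStep (Φ Ψ : List ℕ →. Bool × ℕ) : TState →. ((Bool × ℕ) ⊕ TState) := fun s =>
  cond s.2.2.1
    ((Ψ (s.2.2.2.1.1 :: s.2.2.2.1.2)).map fun r =>
      cond r.1 (Sum.inr (s.1, s.2.1 ++ [r.2], false, (0, []), s.2.2.2.2))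
        (cond (decide (s.2.2.2.2 = [])) (Sum.inl (false, r.2))
          (Sum.inr (s.1, s.2.1, true, (s.2.2.2.1.1, s.2.2.2.1.2 ++ [s.2.2.2.2.headI]),
            s.2.2.2.2.tail))))
    ((Φ (s.1 :: s.2.1)).map fun r =>
      cond r.1 (Sum.inl r) (Sum.inr (s.1, s.2.1, true, (r.2, []), s.2.2.2.2)))

/-- The composed reduction machine. -/
def tTheta (Φ Ψ : List ℕ →. Bool × ℕ) : List ℕ →. Bool × ℕ := fun l =>
  PFun.fix (tStep Φ Ψ) (l.headI, [], false, (0, []), l.tail)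

theorem tStep_partrec {Φ Ψ : List ℕ →. Bool × ℕ} (hΦ : Partrec Φ) (hΨ : Partrec Ψ) :
    Partrec (tStep Φ Ψ) := by
  have pn : Computable fun s : TState => s.1 := Computable.fst
  have pφ : Computable fun s : TState => s.2.1 := Computable.fst.comp Computable.snd
  have pfl : Computable fun s : TState => s.2.2.1 :=
    Computable.fst.comp (Computable.snd.comp Computable.snd)
  have ppq : Computable fun s : TState => s.2.2.2.1 :=
    Computable.fst.comp (Computable.snd.comp (Computable.snd.comp Computable.snd))
  have pq : Computable fun s : TState => s.2.2.2.1.1 := Computable.fst.comp ppq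
  have pψ : Computable fun s : TState => s.2.2.2.1.2 := Computable.snd.comp ppq
  have prest : Computable fun s : TState => s.2.2.2.2 :=
    Computable.snd.comp (Computable.snd.comp (Computable.snd.comp Computable.snd))
  have hcons : Computable₂ fun (a : ℕ) (l : List ℕ) => a :: l := Computable.list_cons
  have hconcat : Computable₂ fun (l : List ℕ) (a : ℕ) => l ++ [a] := Computable.list_concat
  -- branch for flag = true
  have hbody1 : Partrec fun s : TState => Ψ (s.2.2.2.1.1 :: s.2.2.2.1.2) :=
    hΨ.comp (hcons.comp pq pψ)
  have hpost1 : Computable₂ fun (s : TState) (r : Bool × ℕ) =>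
      cond r.1 (Sum.inr (s.1, s.2.1 ++ [r.2], false, (0, []), s.2.2.2.2) : (Bool × ℕ) ⊕ TState)
        (cond (decide (s.2.2.2.2 = [])) (Sum.inl (false, r.2))
          (Sum.inr (s.1, s.2.1, true, (s.2.2.2.1.1, s.2.2.2.1.2 ++ [s.2.2.2.2.headI]),
            s.2.2.2.2.tail))) := by
    have prs : Computable fun p : TState × (Bool × ℕ) => p.1 := Computable.fst
    have prr : Computable fun p : TState × (Bool × ℕ) => p.2 := Computable.snd
    have prr1 : Computable fun p : TState × (Bool × ℕ) => p.2.1 := Computable.fst.comp prr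
    have prr2 : Computable fun p : TState × (Bool × ℕ) => p.2.2 := Computable.snd.comp prr
    have hval1 : Computable fun p : TState × (Bool × ℕ) =>
        (Sum.inr (p.1.1, p.1.2.1 ++ [p.2.2], false, (0, []), p.1.2.2.2.2) :
          (Bool × ℕ) ⊕ TState) :=
      Computable.sumInr.comp
        ((pn.comp prs).pair ((hconcat.comp (pφ.comp prs) prr2).pair
          ((Computable.const false).pair ((Computable.const ((0 : ℕ), ([] : List ℕ))).pair
            (prest.comp prs)))))
    have hempt : Computable fun p : TState × (Bool × ℕ) => decide (p.1.2.2.2.2 = []) :=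
      (Primrec.eq.comp (Primrec.snd.comp (Primrec.snd.comp (Primrec.snd.comp Primrec.snd))
          |>.comp Primrec.fst) (Primrec.const [])).decide.to_comp
    have hval2 : Computable fun p : TState × (Bool × ℕ) =>
        (Sum.inl ((false, p.2.2)) : (Bool × ℕ) ⊕ TState) :=
      Computable.sumInl.comp ((Computable.const false).pair prr2)
    have hval3 : Computable fun p : TState × (Bool × ℕ) =>
        (Sum.inr (p.1.1, p.1.2.1, true, (p.1.2.2.2.1.1, p.1.2.2.2.1.2 ++ [p.1.2.2.2.2.headI]),
          p.1.2.2.2.2.tail) : (Bool × ℕ) ⊕ TState) :=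
      Computable.sumInr.comp
        ((pn.comp prs).pair ((pφ.comp prs).pair ((Computable.const true).pair
          (((pq.comp prs).pair (hconcat.comp (pψ.comp prs)
              (Primrec.list_headI.to_comp.comp (prest.comp prs)))).pair
            (Primrec.list_tail.to_comp.comp (prest.comp prs))))))
    exact Computable.cond prr1 hval1 (Computable.cond hempt hval2 hval3)
  -- branch for flag = false
  have hbody2 : Partrec fun s : TState => Φ (s.1 :: s.2.1) := hΦ.comp (hcons.comp pn pφ)
  have hpost2 : Computable₂ fun (s : TState) (r : Bool × ℕ) =>
      cond r.1 (Sum.inl r : (Bool × ℕ) ⊕ TState)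
        (Sum.inr (s.1, s.2.1, true, (r.2, []), s.2.2.2.2)) := by
    have prs : Computable fun p : TState × (Bool × ℕ) => p.1 := Computable.fst
    have prr : Computable fun p : TState × (Bool × ℕ) => p.2 := Computable.snd
    exact Computable.cond (Computable.fst.comp prr) (Computable.sumInl.comp prr)
      (Computable.sumInr.comp ((pn.comp prs).pair ((pφ.comp prs).pair
        ((Computable.const true).pair (((Computable.snd.comp prr).pair
          (Computable.const ([] : List ℕ))).pair (prest.comp prs))))))
  exact Partrec.cond pfl (hbody1.map hpost1) (hbody2.map hpost2)

theorem tTheta_partrec {Φ Ψ : List ℕ →. Bool × ℕ} (hΦ : Partrec Φ) (hΨ : Partrec Ψ) :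
    Partrec (tTheta Φ Ψ) := by
  have hinit : Computable fun l : List ℕ =>
      ((l.headI, [], false, (0, []), l.tail) : TState) :=
    Primrec.list_headI.to_comp.pair ((Computable.const ([] : List ℕ)).pair
      ((Computable.const false).pair ((Computable.const ((0 : ℕ), ([] : List ℕ))).pair
        Primrec.list_tail.to_comp)))
  exact (Partrec.fix (tStep_partrec hΦ hΨ)).comp hinit

section Sem

variable {Φ Ψ : List ℕ →. Bool × ℕ} {G K : ℕ →. ℕ}

def Reach (Φ Ψ : List ℕ →. Bool × ℕ) (s s' : TState) : Prop :=
  ∀ v, v ∈ PFun.fix (tStep Φ Ψ) s' → v ∈ PFun.fix (tStep Φ Ψ) s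

theorem reach_refl (s : TState) : Reach Φ Ψ s s := fun _ hv => hv

theorem reach_trans {s₁ s₂ s₃ : TState} (h1 : Reach Φ Ψ s₁ s₂) (h2 : Reach Φ Ψ s₂ s₃) :
    Reach Φ Ψ s₁ s₃ := fun v hv => h1 v (h2 v hv)

theorem reach_of_step {s s' : TState} (h : Sum.inr s' ∈ tStep Φ Ψ s) : Reach Φ Ψ s s' :=
  fun _ hv => PFun.mem_fix_iff.mpr (Or.inr ⟨s', h, hv⟩)

theorem halt_of_step {s : TState} {v : Bool × ℕ} (h : Sum.inl v ∈ tStep Φ Ψ s) :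
    v ∈ PFun.fix (tStep Φ Ψ) s := PFun.mem_fix_iff.mpr (Or.inl h)

theorem stepPhiQuery {n : ℕ} {φas : List ℕ} {pq : ℕ × List ℕ} {rest : List ℕ} {q : ℕ}
    (h : (false, q) ∈ Φ (n :: φas)) :
    Sum.inr ((n, φas, true, (q, []), rest) : TState) ∈
      tStep Φ Ψ (n, φas, false, pq, rest) := by
  simp only [tStep, cond]
  exact (Part.mem_map_iff _).mpr ⟨(false, q), h, rfl⟩

theorem stepPhiHalt {n : ℕ} {φas : List ℕ} {pq : ℕ × List ℕ} {rest : List ℕ} {m : ℕ}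
    (h : (true, m) ∈ Φ (n :: φas)) :
    Sum.inl ((true, m) : Bool × ℕ) ∈ tStep Φ Ψ (n, φas, false, pq, rest) := by
  simp only [tStep, cond]
  exact (Part.mem_map_iff _).mpr ⟨(true, m), h, rfl⟩

theorem stepPsiQuery {n : ℕ} {φas ψas : List ℕ} {q q' a : ℕ} {rest : List ℕ}
    (h : (false, q') ∈ Ψ (q :: ψas)) :
    Sum.inr ((n, φas, true, (q, ψas ++ [a]), rest) : TState) ∈
      tStep Φ Ψ (n, φas, true, (q, ψas), a :: rest) := by
  simp only [tStep, cond]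
  exact (Part.mem_map_iff _).mpr ⟨(false, q'), h, by simp⟩

theorem stepPsiOut {n : ℕ} {φas ψas : List ℕ} {q q' : ℕ}
    (h : (false, q') ∈ Ψ (q :: ψas)) :
    Sum.inl ((false, q') : Bool × ℕ) ∈ tStep Φ Ψ (n, φas, true, (q, ψas), []) := by
  simp only [tStep, cond]
  exact (Part.mem_map_iff _).mpr ⟨(false, q'), h, by simp⟩

theorem stepPsiAns {n : ℕ} {φas ψas : List ℕ} {q a : ℕ} {rest : List ℕ}
    (h : (true, a) ∈ Ψ (q :: ψas)) :
    Sum.inr ((n, φas ++ [a], false, (0, []), rest) : TState) ∈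
      tStep Φ Ψ (n, φas, true, (q, ψas), rest) := by
  simp only [tStep, cond]
  exact (Part.mem_map_iff _).mpr ⟨(true, a), h, rfl⟩

theorem innerReach {q : ℕ} {cs : List ℕ} (hcs : ValidHist Ψ K q cs) (n : ℕ) (φas : List ℕ) :
    ∀ i, i ≤ cs.length → ∀ t : List ℕ,
      Reach Φ Ψ (n, φas, true, (q, []), cs.take i ++ t) (n, φas, true, (q, cs.take i), t) := by
  intro i
  induction i with
  | zero => intro _ t; simpa using reach_refl _
  | succ i ih =>
    intro hi t
    have hii : i < cs.length := hi
    have hts : cs.take (i + 1) = cs.take i ++ [cs[i]] := by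
      rw [List.take_succ, List.getElem?_eq_getElem hii]; rfl
    obtain ⟨q', hq', _⟩ := hcs i hii
    have h1 := ih (le_of_lt hii) (cs[i] :: t)
    have h2 : Reach Φ Ψ (n, φas, true, (q, cs.take i), cs[i] :: t)
        (n, φas, true, (q, cs.take i ++ [cs[i]]), t) :=
      reach_of_step (stepPsiQuery hq')
    have goal_eq : cs.take (i + 1) ++ t = cs.take i ++ (cs[i] :: t) := by
      rw [hts, List.append_assoc]; rfl
    rw [goal_eq, hts]
    exact reach_trans h1 h2

theorem trans_main {n : ℕ} {bs : List ℕ} (hbs : ValidHist Φ G n bs)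
    (hred : ∀ q a, a ∈ G q → HaltsTo Ψ K q a) :
    ∀ j, j ≤ bs.length → ∃ as : List ℕ, ValidHist (tTheta Φ Ψ) K n as ∧
      ∀ t : List ℕ, Reach Φ Ψ (n, [], false, (0, []), as ++ t)
        (n, bs.take j, false, (0, []), t) := by
  intro j
  induction j with
  | zero =>
    refine fun _ => ⟨[], fun k hk => absurd hk (by simp), fun t => by simpa using reach_refl _⟩
  | succ j ih =>
    intro hj
    have hjlt : j < bs.length := hj
    obtain ⟨as, hval, hreach⟩ := ih (le_of_lt hjlt)
    obtain ⟨q, hq, ha⟩ := hbs j hjlt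
    obtain ⟨cs, hcs, hcend⟩ := hred q (bs[j]) ha
    -- reach from the start to the pending state with `cs.take i` consumed
    have RP : ∀ i, i ≤ cs.length → ∀ t : List ℕ,
        Reach Φ Ψ (n, [], false, (0, []), (as ++ cs.take i) ++ t)
          (n, bs.take j, true, (q, cs.take i), t) := by
      intro i hi t
      have r1 := hreach (cs.take i ++ t)
      have r2 : Reach Φ Ψ (n, bs.take j, false, (0, []), cs.take i ++ t)
          (n, bs.take j, true, (q, []), cs.take i ++ t) := reach_of_step (stepPhiQuery hq)
      have r3 := innerReach (Φ := Φ) (K := K) hcs n (bs.take j) i hi t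
      have := reach_trans (reach_trans r1 r2) r3
      simpa [List.append_assoc] using this
    refine ⟨as ++ cs, ?_, ?_⟩
    · -- validity of the concatenated history
      intro p hp
      rcases Nat.lt_or_ge p as.length with hlt | hge
      · obtain ⟨q0, h0, hK0⟩ := hval p hlt
        refine ⟨q0, ?_, ?_⟩
        · have : (as ++ cs).take p = as.take p := by
            rw [List.take_append, Nat.sub_eq_zero_of_le (le_of_lt hlt)]
            simp
          rwa [this]
        · rwa [List.getElem_append_left hlt]
      · have hp' : p < as.length + cs.length := by simpa using hp
        set i := p - as.length with hidef
        have hi : i < cs.length := by omega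
        have hpe : p = as.length + i := by omega
        have htake : (as ++ cs).take p = as ++ cs.take i := by
          rw [List.take_append, List.take_of_length_le (by omega)]
        have hget : (as ++ cs)[p]'hp = cs[i]'hi := by
          rw [List.getElem_append_right hge]
        obtain ⟨q', hq'Ψ, hK'⟩ := hcs i hi
        refine ⟨q', ?_, by rwa [hget]⟩
        rw [htake]
        show (false, q') ∈ tTheta Φ Ψ (n :: (as ++ cs.take i))
        have hθ : tTheta Φ Ψ (n :: (as ++ cs.take i)) =
            PFun.fix (tStep Φ Ψ) (n, [], false, (0, []), as ++ cs.take i) := rfl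
        rw [hθ]
        have hr := RP i (le_of_lt hi) []
        have hout := halt_of_step (Φ := Φ) (stepPsiOut (Φ := Φ) (n := n) (φas := bs.take j) hq'Ψ)
        have := hr _ hout
        simpa using this
    · -- reach property for the extended history
      intro t
      have r1 := RP cs.length le_rfl t
      rw [List.take_length] at r1
      have r2 : Reach Φ Ψ (n, bs.take j, true, (q, cs), t)
          (n, bs.take j ++ [bs[j]], false, (0, []), t) := reach_of_step (stepPsiAns hcend)
      have hbt : bs.take (j + 1) = bs.take j ++ [bs[j]] := by
        rw [List.take_succ, List.getElem?_eq_getElem hjlt]; rfl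
      rw [hbt]
      exact reach_trans r1 r2

end Sem

theorem subT_trans {f G K : ℕ →. ℕ} (h1 : SubTuringLE f G) (h2 : SubTuringLE G K) :
    SubTuringLE f K := by
  obtain ⟨Φ, hΦ, hcf⟩ := h1
  obtain ⟨Ψ, hΨ, hcG⟩ := h2
  refine ⟨tTheta Φ Ψ, tTheta_partrec hΦ hΨ, fun n m hm => ?_⟩
  obtain ⟨bs, hbs, hend⟩ := hcf n m hm
  obtain ⟨as, hval, hreach⟩ := trans_main (K := K) hbs (fun q a ha => hcG q a ha)
    bs.length le_rfl
  refine ⟨as, hval, ?_⟩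
  show (true, m) ∈ tTheta Φ Ψ (n :: as)
  have hθ : tTheta Φ Ψ (n :: as) =
      PFun.fix (tStep Φ Ψ) (n, [], false, (0, []), as) := rfl
  rw [hθ]
  have hr := hreach []
  rw [List.take_length] at hr
  have hout := halt_of_step (Ψ := Ψ) (stepPhiHalt (Ψ := Ψ) (pq := ((0:ℕ), ([] : List ℕ))) (rest := ([] : List ℕ)) hend)
  have := hr _ hout
  simpa using this


/-- Decoding of partial computable functions `List ℕ →. Bool × ℕ` from codes. -/
def decodeCode (e : ℕ) : List ℕ →. Bool × ℕ := fun l =>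
  (Nat.Partrec.Code.eval (Denumerable.ofNat Nat.Partrec.Code e) (Encodable.encode l)).bind
    fun r => Part.ofOption (Encodable.decode (α := Bool × ℕ) r)

theorem decodeCode_partrec (e : ℕ) : Partrec (decodeCode e) := by
  have h1 : Partrec (Nat.Partrec.Code.eval (Denumerable.ofNat Nat.Partrec.Code e)) :=
    Nat.Partrec.Code.eval_part.comp (Computable.const _) Computable.id
  have h2 : Partrec fun l : List ℕ =>
      Nat.Partrec.Code.eval (Denumerable.ofNat Nat.Partrec.Code e) (Encodable.encode l) :=
    h1.comp Computable.encode
  exact h2.bind (Computable.ofOption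
    ((Computable.decode (α := Bool × ℕ)).comp Computable.snd)).to₂

theorem bind_decode_encode (p : Part (Bool × ℕ)) :
    (p.map Encodable.encode).bind
      (fun r => Part.ofOption (Encodable.decode (α := Bool × ℕ) r)) = p := by
  ext a
  simp only [Part.mem_bind_iff, Part.mem_map_iff, Part.mem_ofOption]
  constructor
  · rintro ⟨r, ⟨b, hb, rfl⟩, ha⟩
    rw [Encodable.encodek] at ha
    simp only [Option.mem_some_iff] at ha
    subst ha
    exact hb
  · intro ha
    exact ⟨Encodable.encode a, ⟨a, ha, rfl⟩, by rw [Encodable.encodek]; rfl⟩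

theorem decodeCode_sound {Φ : List ℕ →. Bool × ℕ} (hΦ : Partrec Φ) :
    ∃ e, decodeCode e = Φ := by
  obtain ⟨c, hc⟩ := Nat.Partrec.Code.exists_code.1 hΦ
  refine ⟨Encodable.encode c, funext fun l => ?_⟩
  have heval : Nat.Partrec.Code.eval c (Encodable.encode l) =
      (Φ l).map Encodable.encode := by
    rw [hc]
    simp [Encodable.encodek]
  simp only [decodeCode, Denumerable.ofNat_encode, heval]
  exact bind_decode_encode (Φ l)

theorem mem_ite_none {c : Prop} [Decidable c] {p : Part ℕ} {a : ℕ} :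
    (a ∈ if c then p else Part.none) ↔ c ∧ a ∈ p := by
  split_ifs with hc <;> simp [hc]

/-- The finitely-determined part of the oracle after stage `k`: columns `i < k`
with passwords `π i`. -/
def condFix (g : ℕ → ℕ →. ℕ) (π : ℕ → ℕ) (k : ℕ) : ℕ →. ℕ := fun u =>
  if u.unpair.1.unpair.2 < k ∧ u.unpair.1.unpair.1 = π u.unpair.1.unpair.2
  then g u.unpair.1.unpair.2 u.unpair.2 else Part.none

/-- The largest oracle compatible with condition `(π, k, t)`. -/
def condMax (g : ℕ → ℕ →. ℕ) (π : ℕ → ℕ) (k t : ℕ) : ℕ →. ℕ := fun u =>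
  if (u.unpair.1.unpair.2 < k ∧ u.unpair.1.unpair.1 = π u.unpair.1.unpair.2)
      ∨ (k ≤ u.unpair.1.unpair.2 ∧ t < u.unpair.1.unpair.1)
  then g u.unpair.1.unpair.2 u.unpair.2 else Part.none

/-- The final oracle: every column `i`, unlocked by password `π i`. -/
def colF (g : ℕ → ℕ →. ℕ) (π : ℕ → ℕ) : ℕ →. ℕ := fun u =>
  if u.unpair.1.unpair.1 = π u.unpair.1.unpair.2
  then g u.unpair.1.unpair.2 u.unpair.2 else Part.none

theorem condMax_step_sub {g : ℕ → ℕ →. ℕ} {π : ℕ → ℕ} {e t c : ℕ} (hc : t < c) :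
    Subfn (condMax g (Function.update π e c) (e + 1) c) (condMax g π e t) := by
  intro q a ha
  rw [condMax, mem_ite_none] at ha ⊢
  obtain ⟨hcond, ha⟩ := ha
  refine ⟨?_, ha⟩
  rcases hcond with ⟨hik, hpe⟩ | ⟨hik, hpc⟩
  · rcases Nat.lt_or_ge q.unpair.1.unpair.2 e with hie | hie
    · left
      rw [Function.update_of_ne (by omega)] at hpe
      exact ⟨hie, hpe⟩
    · have : q.unpair.1.unpair.2 = e := by omega
      rw [this] at hpe ⊢
      rw [Function.update_self] at hpe
      right
      exact ⟨le_rfl, by omega⟩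
  · right
    exact ⟨by omega, by omega⟩

theorem chain_le {g : ℕ → ℕ →. ℕ} (hstep : ∀ n, SubTuringLE (g n) (g (n + 1))) :
    ∀ {i j}, i ≤ j → SubTuringLE (g i) (g j) := by
  intro i j hij
  induction hij with
  | refl => exact subT_refl _
  | @step j _ ih => exact subT_trans ih (hstep j)

theorem condFix_le {g : ℕ → ℕ →. ℕ} (hstep : ∀ n, SubTuringLE (g n) (g (n + 1)))
    (π : ℕ → ℕ) : ∀ k, SubTuringLE (condFix g π k) (g k) := by
  intro k
  induction k with
  | zero =>
    apply subT_empty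
    intro u a ha
    rw [condFix, mem_ite_none] at ha
    exact Nat.not_lt_zero _ ha.1.1
  | succ k ih =>
    have base : SubTuringLE (fun u => g k u.unpair.2) (g k) :=
      subT_query (fun u => u.unpair.2) (Computable.snd.comp Computable.unpair)
        (fun _ _ ha => ha)
    have hPp : PrimrecPred fun u : ℕ =>
        u.unpair.1.unpair.2 = k ∧ u.unpair.1.unpair.1 = π k := by
      have hi : Primrec fun u : ℕ => u.unpair.1.unpair.2 :=
        Primrec.snd.comp (Primrec.unpair.comp (Primrec.fst.comp Primrec.unpair))
      have hp : Primrec fun u : ℕ => u.unpair.1.unpair.1 :=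
        Primrec.fst.comp (Primrec.unpair.comp (Primrec.fst.comp Primrec.unpair))
      exact PrimrecPred.and (Primrec.eq.comp hi (Primrec.const k))
        (Primrec.eq.comp hp (Primrec.const (π k)))
    have hP : Computable fun u : ℕ =>
        decide (u.unpair.1.unpair.2 = k ∧ u.unpair.1.unpair.1 = π k) := hPp.decide.to_comp
    have hcomb := subT_ite hP (subT_trans base (hstep k)) (subT_trans ih (hstep k))
    apply subT_congr hcomb
    intro u
    by_cases hcase : u.unpair.1.unpair.2 = k ∧ u.unpair.1.unpair.1 = π k
    · rw [decide_eq_true hcase]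
      simp only [cond_true, condFix]
      rw [if_pos (⟨by omega, by rw [hcase.1]; exact hcase.2⟩ :
        u.unpair.1.unpair.2 < k + 1 ∧ u.unpair.1.unpair.1 = π u.unpair.1.unpair.2)]
      rw [hcase.1]
    · rw [decide_eq_false hcase]
      simp only [cond_false, condFix]
      by_cases h2 : u.unpair.1.unpair.2 < k ∧ u.unpair.1.unpair.1 = π u.unpair.1.unpair.2
      · rw [if_pos h2, if_pos ⟨by omega, h2.2⟩]
      · rw [if_neg h2, if_neg ?_]
        intro h3
        rcases Nat.lt_or_ge u.unpair.1.unpair.2 k with hik | hik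
        · exact h2 ⟨hik, h3.2⟩
        · exact hcase ⟨by omega, by rw [show u.unpair.1.unpair.2 = k by omega] at h3; exact h3.2⟩

theorem stage {g : ℕ → ℕ →. ℕ} {h : ℕ →. ℕ}
    (hstep : ∀ n, SubTuringLE (g n) (g (n + 1)))
    (hninc : ∀ n, ¬ SubTuringLE (g (n + 1)) (g n))
    (hub : ∀ n, SubTuringLE (g n) h) (e t : ℕ) (π : ℕ → ℕ) :
    ∃ c : ℕ, t < c ∧ ∃ n m, m ∈ h n ∧
      ¬ HaltsTo (decodeCode e) (condMax g (Function.update π e c) (e + 1) c) n m := by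
  by_cases hA : ∃ n m, m ∈ h n ∧ ¬ HaltsTo (decodeCode e) (condMax g π e t) n m
  · obtain ⟨n, m, hm, hn⟩ := hA
    exact ⟨t + 1, Nat.lt_succ_self t, n, m, hm,
      fun hh => hn (haltsTo_mono (condMax_step_sub (Nat.lt_succ_self t)) hh)⟩
  · push_neg at hA
    by_cases hC : ∀ n m, m ∈ h n → HaltsTo (decodeCode e) (condFix g π e) n m
    · exfalso
      have hle : SubTuringLE h (condFix g π e) := ⟨decodeCode e, decodeCode_partrec e, hC⟩
      exact hninc e (subT_trans (subT_trans (hub (e + 1)) hle) (condFix_le hstep π e))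
    · push_neg at hC
      obtain ⟨n, m, hm, hnot⟩ := hC
      obtain ⟨as, hv, hend⟩ := hA n m hm
      have hex : ∃ j, ∃ hj : j < as.length, ∃ q,
          (false, q) ∈ decodeCode e (n :: as.take j) ∧
          ¬ (q.unpair.1.unpair.2 < e ∧ q.unpair.1.unpair.1 = π q.unpair.1.unpair.2) := by
        by_contra hco
        push_neg at hco
        apply hnot
        refine ⟨as, ?_, hend⟩
        intro k hk
        obtain ⟨q, hq, ha⟩ := hv k hk
        rw [condMax, mem_ite_none] at ha
        refine ⟨q, hq, ?_⟩
        rw [condFix, mem_ite_none]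
        exact ⟨hco k hk q hq, ha.2⟩
      obtain ⟨j, hj, q, hq, hqc⟩ := hex
      obtain ⟨q₂, hq₂, ha₂⟩ := hv j hj
      have hq₂q : q₂ = q := congrArg Prod.snd (Part.mem_unique hq₂ hq)
      subst hq₂q
      rw [condMax, mem_ite_none] at ha₂
      have hMc := ha₂.1
      have hie : e ≤ q₂.unpair.1.unpair.2 ∧ t < q₂.unpair.1.unpair.1 := by
        rcases hMc with hc1 | hc2
        · exact absurd hc1 hqc
        · exact hc2
      refine ⟨q₂.unpair.1.unpair.1 + 1, by omega, n, m, hm, ?_⟩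
      apply halts_blocked (condMax_step_sub (by omega)) hv hend hj hq ?_ m
      intro a ha'
      rw [condMax, mem_ite_none] at ha'
      rcases ha'.1 with ⟨hik, hpe⟩ | ⟨hik, hpc⟩
      · have hiq : q₂.unpair.1.unpair.2 = e := by omega
        rw [hiq, Function.update_self] at hpe
        omega
      · omega

end NoSup

open NoSup

theorem no_sup_of_strictly_increasing (g : ℕ → ℕ →. ℕ) (h : ℕ →. ℕ)
    (hinc : ∀ n, SubTuringLE (g n) (g (n + 1)) ∧ ¬ SubTuringLE (g (n + 1)) (g n))
    (hub : ∀ n, SubTuringLE (g n) h) :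
    ∃ f : ℕ →. ℕ, (∀ n, SubTuringLE (g n) f) ∧ ¬ SubTuringLE h f := by
  have hstep : ∀ n, SubTuringLE (g n) (g (n + 1)) := fun n => (hinc n).1
  have hninc : ∀ n, ¬ SubTuringLE (g (n + 1)) (g n) := fun n => (hinc n).2
  have key := fun (e t : ℕ) (π : ℕ → ℕ) => stage hstep hninc hub e t π
  choose C hC1 hC2 using key
  -- the stage-by-stage construction
  set S : ℕ → ℕ × (ℕ → ℕ) := fun e => Nat.rec ((0 : ℕ), fun _ => (0 : ℕ))
    (fun e s => (C e s.1 s.2, Function.update s.2 e (C e s.1 s.2))) e with hSdef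
  have hS : ∀ e, S (e + 1) = (C e (S e).1 (S e).2,
      Function.update (S e).2 e (C e (S e).1 (S e).2)) := fun e => rfl
  set piF : ℕ → ℕ := fun i => (S (i + 1)).2 i with hπdef
  have tmono1 : ∀ e, (S e).1 < (S (e + 1)).1 := by
    intro e
    rw [hS e]
    exact hC1 e (S e).1 (S e).2
  have tmono : ∀ e e', e ≤ e' → (S e).1 ≤ (S e').1 := by
    intro e e' hee
    induction hee with
    | refl => exact le_rfl
    | @step j _ ih => exact le_trans ih (le_of_lt (tmono1 j))
  have coher : ∀ e i, i < e → (S e).2 i = piF i := by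
    intro e
    induction e with
    | zero => omega
    | succ e ih =>
      intro i hi
      rcases Nat.lt_or_ge i e with hie | hie
      · rw [hS e]
        simp only
        rw [Function.update_of_ne (by omega)]
        exact ih i hie
      · have : i = e := by omega
        subst this
        rfl
  have pi_big : ∀ i, (S i).1 < piF i := by
    intro i
    have h1 : piF i = Function.update (S i).2 i (C i (S i).1 (S i).2) i := by
      show (S (i + 1)).2 i = _
      rw [hS i]
    rw [h1, Function.update_self]
    exact hC1 i (S i).1 (S i).2
  refine ⟨colF g piF, ?_, ?_⟩
  · -- every g n reduces to f
    intro n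
    have hτ : Computable fun x : ℕ => Nat.pair (Nat.pair (piF n) n) x :=
      (Primrec₂.natPair.comp (Primrec.const (Nat.pair (piF n) n)) Primrec.id).to_comp
    apply subT_query _ hτ
    intro x a ha
    rw [colF, mem_ite_none]
    simp only [Nat.unpair_pair]
    exact ⟨trivial, ha⟩
  · -- h does not reduce to f
    rintro ⟨Φ, hΦ, hcomp⟩
    obtain ⟨e, he⟩ := decodeCode_sound hΦ
    obtain ⟨n, m, hm, hn⟩ := hC2 e (S e).1 (S e).2
    apply hn
    have hfsub : Subfn (colF g piF)
        (condMax g (Function.update (S e).2 e (C e (S e).1 (S e).2)) (e + 1)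
          (C e (S e).1 (S e).2)) := by
      intro u a ha
      rw [colF, mem_ite_none] at ha
      rw [condMax, mem_ite_none]
      refine ⟨?_, ha.2⟩
      rcases Nat.lt_or_ge u.unpair.1.unpair.2 (e + 1) with hie | hie
      · left
        refine ⟨hie, ?_⟩
        have : Function.update (S e).2 e (C e (S e).1 (S e).2) = (S (e + 1)).2 := by
          rw [hS e]
        rw [this, coher (e + 1) _ hie]
        exact ha.1
      · right
        refine ⟨hie, ?_⟩
        have h1 : (S (e + 1)).1 ≤ (S u.unpair.1.unpair.2).1 := tmono _ _ hie
        have h2 : (S u.unpair.1.unpair.2).1 < piF u.unpair.1.unpair.2 := pi_big _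
        have h3 : (S (e + 1)).1 = C e (S e).1 (S e).2 := by rw [hS e]
        rw [← ha.1] at h2
        omega
    have := haltsTo_mono hfsub (hcomp n m hm)
    rwa [he]
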